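/- Suppose G is a left-orderable group, K is a normal subgroup of G, and π : G → ℤ is a surjective homomorphism with kernel K. Suppose that Aut(K) acts faithfully on LO(K), and that there exist t ∈ G with π(t) = 1 and a positive cone P_K of K with tP_Kt⁻¹ = P_K (i.e. conjugation by the generator of ℤ preserves a left-ordering of K). Then Aut(G) acts faithfully on LO(G): for every automorphism φ of G with φ ≠ id there exists a positive cone P of G with φ(P) ≠ P. -/

import Mathlib

/-- `P` is the positive cone of a left-invariant strict total order on `G`. -/
def IsPositiveCone {G : Type*} [Group G] (P : Set G) : Prop :=
  (∀ a ∈ P, ∀ b ∈ P, a * b ∈ P) ∧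
  (∀ g : G, g ∈ P ∨ g⁻¹ ∈ P ∨ g = 1) ∧
  (∀ g ∈ P, g⁻¹ ∉ P) ∧
  (1 : G) ∉ P

namespace AutFaithfulAux

variable {G : Type*} [Group G]

lemma n_one {n : G → ℤ} (hadd : ∀ a b, n (a * b) = n a + n b) : n 1 = 0 := by
  have h := hadd 1 1
  rw [one_mul] at h
  omega

lemma n_inv {n : G → ℤ} (hadd : ∀ a b, n (a * b) = n a + n b) (g : G) : n g⁻¹ = -n g := by
  have h := hadd g⁻¹ g
  rw [inv_mul_cancel] at h
  have h1 := n_one hadd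
  omega

lemma n_zpow {n : G → ℤ} (hadd : ∀ a b, n (a * b) = n a + n b) (g : G) :
    ∀ z : ℤ, n (g ^ z) = z * n g := by
  have hp : ∀ k : ℕ, n (g ^ k) = k * n g := by
    intro k
    induction k with
    | zero => simpa using n_one hadd
    | succ k ih => rw [pow_succ, hadd, ih]; push_cast; ring
  intro z
  induction z using Int.rec with
  | ofNat k => simpa [zpow_natCast] using hp k
  | negSucc k => rw [zpow_negSucc, n_inv hadd, hp]; simp [Int.negSucc_eq]; ring

/-- The image of a positive cone under an automorphism is a positive cone. -/
lemma cone_image (φ : G ≃* G) {P : Set G} (hP : IsPositiveCone P) :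
    IsPositiveCone (⇑φ '' P) := by
  obtain ⟨hmul, htri, hasym, hone⟩ := hP
  refine ⟨?_, ?_, ?_, ?_⟩
  · rintro a ⟨x, hx, rfl⟩ b ⟨y, hy, rfl⟩
    exact ⟨x * y, hmul x hx y hy, map_mul φ x y⟩
  · intro g
    rcases htri (φ.symm g) with h | h | h
    · exact Or.inl ⟨_, h, φ.apply_symm_apply g⟩
    · exact Or.inr (Or.inl ⟨_, h, by rw [map_inv, φ.apply_symm_apply]⟩)
    · refine Or.inr (Or.inr ?_)
      have := congrArg φ h
      simpa using this
  · rintro g ⟨x, hx, rfl⟩ ⟨y, hy, hxy⟩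
    have hyx : y = x⁻¹ := φ.injective (by rw [hxy, map_inv])
    exact hasym x hx (hyx ▸ hy)
  · rintro ⟨x, hx, h1⟩
    have hx1 : x = 1 := φ.injective (by simpa using h1)
    exact hone (hx1 ▸ hx)

/-- ℤ-dominant lexicographic cone. -/
lemma cone_lex (n : G → ℤ) (hadd : ∀ a b, n (a * b) = n a + n b)
    (S : Set G) (hS0 : ∀ x ∈ S, n x = 0)
    (hSmul : ∀ a ∈ S, ∀ b ∈ S, a * b ∈ S)
    (hStri : ∀ g, n g = 0 → (g ∈ S ∨ g⁻¹ ∈ S ∨ g = 1))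
    (hSasym : ∀ g ∈ S, g⁻¹ ∉ S) (hS1 : (1 : G) ∉ S) :
    IsPositiveCone {g : G | 0 < n g ∨ g ∈ S} := by
  refine ⟨?_, ?_, ?_, ?_⟩
  · rintro a (ha | ha) b (hb | hb)
    · left; rw [hadd]; omega
    · left; have := hS0 b hb; rw [hadd]; omega
    · left; have := hS0 a ha; rw [hadd]; omega
    · right; exact hSmul a ha b hb
  · intro g
    rcases lt_trichotomy (n g) 0 with h | h | h
    · refine Or.inr (Or.inl (Or.inl ?_)); rw [n_inv hadd]; omega
    · rcases hStri g h with h' | h' | h'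
      · exact Or.inl (Or.inr h')
      · exact Or.inr (Or.inl (Or.inr h'))
      · exact Or.inr (Or.inr h')
    · exact Or.inl (Or.inl h)
  · rintro g (hg | hg) (hg' | hg')
    · rw [n_inv hadd] at hg'; omega
    · have := hS0 _ hg'; rw [n_inv hadd] at this; omega
    · have := hS0 _ hg; rw [n_inv hadd] at hg'; omega
    · exact hSasym g hg hg'
  · rintro (h | h)
    · rw [n_one hadd] at h; omega
    · exact hS1 h

/-- Extend one-step conjugation invariance to all integer powers. -/
lemma conj_all (t : G) (S : Set G)
    (h1 : ∀ x ∈ S, t * x * t⁻¹ ∈ S) (h2 : ∀ x ∈ S, t⁻¹ * x * t ∈ S) :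
    ∀ m : ℤ, ∀ x ∈ S, t ^ m * x * t ^ (-m) ∈ S := by
  intro m
  induction m using Int.induction_on with
  | zero => simpa using fun x hx => hx
  | succ k ih =>
    intro x hx
    have e : t ^ ((k : ℤ) + 1) * x * t ^ (-((k : ℤ) + 1)) =
        t * (t ^ (k : ℤ) * x * t ^ (-(k : ℤ))) * t⁻¹ := by group
    rw [e]; exact h1 _ (ih x hx)
  | pred k ih =>
    intro x hx
    have e : t ^ (-(k : ℤ) - 1) * x * t ^ (-(-(k : ℤ) - 1)) =
        t⁻¹ * (t ^ (-(k : ℤ)) * x * t ^ (-(-(k : ℤ)))) * t := by group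
    rw [e]; exact h2 _ (ih x hx)

/-- K-dominant lexicographic cone, available when conjugation by `t` preserves `S`. -/
lemma cone_dom (n : G → ℤ) (hadd : ∀ a b, n (a * b) = n a + n b)
    (t : G) (hnt : n t = 1)
    (S : Set G) (hS0 : ∀ x ∈ S, n x = 0)
    (hSmul : ∀ a ∈ S, ∀ b ∈ S, a * b ∈ S)
    (hStri : ∀ g, n g = 0 → (g ∈ S ∨ g⁻¹ ∈ S ∨ g = 1))
    (hSasym : ∀ g ∈ S, g⁻¹ ∉ S) (hS1 : (1 : G) ∉ S)
    (hconj : ∀ m : ℤ, ∀ x ∈ S, t ^ m * x * t ^ (-m) ∈ S) :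
    IsPositiveCone
      {g : G | g * t ^ (-n g) ∈ S ∨ (g * t ^ (-n g) = 1 ∧ 0 < n g)} := by
  have hcmul : ∀ a b : G, (a * b) * t ^ (-n (a * b)) =
      (a * t ^ (-n a)) * (t ^ (n a) * (b * t ^ (-n b)) * t ^ (-n a)) := by
    intro a b
    rw [hadd]
    group
  have hcinv : ∀ g : G, g⁻¹ * t ^ (-n g⁻¹) =
      t ^ (-n g) * (g * t ^ (-n g))⁻¹ * t ^ (-(-n g)) := by
    intro g
    rw [n_inv hadd]
    group
  have hconj' : ∀ m : ℤ, ∀ x : G, t ^ m * x * t ^ (-m) ∈ S → x ∈ S := by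
    intro m x hx
    have := hconj (-m) _ hx
    have e : t ^ (-m) * (t ^ m * x * t ^ (-m)) * t ^ (-(-m)) = x := by group
    rwa [e] at this
  refine ⟨?_, ?_, ?_, ?_⟩
  · rintro a (ha | ⟨ha1, ha2⟩) b (hb | ⟨hb1, hb2⟩)
    · left; rw [hcmul]; exact hSmul _ ha _ (hconj _ _ hb)
    · left; rw [hcmul, hb1]; simpa using ha
    · left; rw [hcmul, ha1, one_mul]; exact hconj _ _ hb
    · right
      constructor
      · rw [hcmul, ha1, hb1]; group
      · rw [hadd]; omega
  · intro g
    have hn0 : n (g * t ^ (-n g)) = 0 := by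
      rw [hadd, n_zpow hadd, hnt]; ring
    rcases hStri _ hn0 with h | h | h
    · exact Or.inl (Or.inl h)
    · refine Or.inr (Or.inl (Or.inl ?_))
      rw [hcinv]; exact hconj _ _ h
    · rcases lt_trichotomy (n g) 0 with h' | h' | h'
      · refine Or.inr (Or.inl (Or.inr ⟨?_, ?_⟩))
        · rw [hcinv, h]; group
        · rw [n_inv hadd]; omega
      · refine Or.inr (Or.inr ?_)
        have : g * t ^ (-n g) = g := by rw [h']; group
        rw [this] at h; exact h
      · exact Or.inl (Or.inr ⟨h, h'⟩)
  · rintro g (hg | ⟨hg1, hg2⟩) (hg' | ⟨hg'1, hg'2⟩)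
    · apply hSasym _ hg
      rw [hcinv] at hg'
      have := hconj' _ _ hg'
      exact this
    · apply hS1
      rw [hcinv] at hg'1
      have h2 : (g * t ^ (-n g))⁻¹ = 1 := by
        have := congrArg (fun x => t ^ (-(-n g)) * x * t ^ (-n g)) hg'1
        simpa [mul_assoc] using (by
          have e : t ^ (-(-n g)) * (t ^ (-n g) * (g * t ^ (-n g))⁻¹ * t ^ (-(-n g))) * t ^ (-n g)
              = (g * t ^ (-n g))⁻¹ := by group
          rw [← e, hg'1]
          group : (g * t ^ (-n g))⁻¹ = 1)
      rw [inv_eq_one] at h2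
      rw [← h2]; exact hg
    · apply hS1
      rw [hcinv, hg1] at hg'
      simpa using hg'
    · rw [n_inv hadd] at hg'2; omega
  · rintro (h | ⟨h1, h2⟩)
    · apply hS1
      have : (1 : G) * t ^ (-n 1) = 1 := by rw [n_one hadd]; group
      rwa [this] at h
    · rw [n_one hadd] at h2; omega



/-- Transfer a positive cone of a subgroup `K` to properties of its image in `G`. -/
lemma subgroup_cone_props (n : G → ℤ) (K : Subgroup G)
    (hmem : ∀ g, g ∈ K ↔ n g = 0) {Q : Set K} (hQ : IsPositiveCone Q) :
    (∀ x ∈ (Subtype.val '' Q : Set G), n x = 0) ∧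
    (∀ a ∈ (Subtype.val '' Q : Set G), ∀ b ∈ (Subtype.val '' Q : Set G),
      a * b ∈ (Subtype.val '' Q : Set G)) ∧
    (∀ g, n g = 0 → (g ∈ (Subtype.val '' Q : Set G) ∨
      g⁻¹ ∈ (Subtype.val '' Q : Set G) ∨ g = 1)) ∧
    (∀ g ∈ (Subtype.val '' Q : Set G), g⁻¹ ∉ (Subtype.val '' Q : Set G)) ∧
    (1 : G) ∉ (Subtype.val '' Q : Set G) := by
  obtain ⟨hmul, htri, hasym, hone⟩ := hQ
  refine ⟨?_, ?_, ?_, ?_, ?_⟩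
  · rintro x ⟨k, hk, rfl⟩
    exact (hmem k).1 k.2
  · rintro a ⟨x, hx, rfl⟩ b ⟨y, hy, rfl⟩
    exact ⟨x * y, hmul x hx y hy, rfl⟩
  · intro g hg
    rcases htri ⟨g, (hmem g).2 hg⟩ with h | h | h
    · exact Or.inl ⟨_, h, rfl⟩
    · exact Or.inr (Or.inl ⟨_, h, rfl⟩)
    · exact Or.inr (Or.inr (congrArg Subtype.val h))
  · rintro g ⟨x, hx, rfl⟩ ⟨y, hy, hxy⟩
    have hyx : y = x⁻¹ := Subtype.ext (by simpa using hxy)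
    exact hasym x hx (hyx ▸ hy)
  · rintro ⟨x, hx, h1⟩
    have hx1 : x = 1 := Subtype.ext h1
    exact hone (hx1 ▸ hx)


end AutFaithfulAux

open AutFaithfulAux

/-- Suppose `G` is left-orderable, `K ◁ G` with `G/K ≅ ℤ` via a surjection `π : G → ℤ`
with kernel `K`, `Aut(K)` acts faithfully on `LO(K)`, and conjugation by some `t`
mapping to the generator of `ℤ` preserves a left-ordering of `K`.  Then `Aut(G)` acts
faithfully on `LO(G)`. -/
theorem aut_faithful_of_extension_by_Z {G : Type*} [Group G]
    (hLO : ∃ P : Set G, IsPositiveCone P)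
    (K : Subgroup G) (π : G →* Multiplicative ℤ)
    (hsurj : Function.Surjective π) (hker : π.ker = K)
    (hK : ∀ ψ : K ≃* K, ψ ≠ MulEquiv.refl K →
      ∃ Q : Set K, IsPositiveCone Q ∧ ⇑ψ '' Q ≠ Q)
    (t : G) (ht : π t = Multiplicative.ofAdd 1)
    (PK : Set K) (hPK : IsPositiveCone PK)
    (hconj : {x : G | ∃ k : K, k ∈ PK ∧ x = t * (k : G) * t⁻¹} = Subtype.val '' PK) :
    ∀ φ : G ≃* G, φ ≠ MulEquiv.refl G →
      ∃ P : Set G, IsPositiveCone P ∧ ⇑φ '' P ≠ P := by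
  intro φ hφ
  set n : G → ℤ := fun g => Multiplicative.toAdd (π g) with hn
  have hadd : ∀ a b, n (a * b) = n a + n b := by
    intro a b; simp [hn, map_mul]
  have hmem : ∀ g, g ∈ K ↔ n g = 0 := by
    intro g
    rw [← hker, MonoidHom.mem_ker]
    constructor
    · intro h; simp [hn, h]
    · intro h
      have := congrArg Multiplicative.ofAdd h
      simpa [hn] using this
  have hnt : n t = 1 := by simp [hn, ht]
  obtain ⟨hS0, hSmul, hStri, hSasym, hS1⟩ := subgroup_cone_props n K hmem hPK
  set S : Set G := Subtype.val '' PK with hSdef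
  -- one-step conjugation invariance of S
  have hc1 : ∀ x ∈ S, t * x * t⁻¹ ∈ S := by
    rintro x ⟨k, hk, rfl⟩
    rw [← hconj]
    exact ⟨k, hk, rfl⟩
  have hc2 : ∀ x ∈ S, t⁻¹ * x * t ∈ S := by
    intro x hx
    rw [← hconj] at hx
    obtain ⟨k, hk, rfl⟩ := hx
    have e : t⁻¹ * (t * (k : G) * t⁻¹) * t = (k : G) := by group
    rw [e]
    exact ⟨k, hk, rfl⟩
  have hconjm := conj_all t S hc1 hc2
  by_cases hA : ∀ g, n g = 0 → n (φ g) = 0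
  · -- π ∘ φ = m · π for m = ±1
    set m : ℤ := n (φ t) with hm
    have hlin : ∀ g, n (φ g) = m * n g := by
      intro g
      have hd : n (g * t ^ (-n g)) = 0 := by
        rw [hadd, n_zpow hadd, hnt]; ring
      have h2 := hA _ hd
      rw [map_mul, map_zpow, hadd, n_zpow hadd] at h2
      linear_combination h2
    have hmunit : m = 1 ∨ m = -1 := by
      have h1 : n (φ (φ.symm t)) = 1 := by rw [φ.apply_symm_apply, hnt]
      rw [hlin] at h1
      exact Int.isUnit_iff.mp (IsUnit.of_mul_eq_one _ h1)
    rcases hmunit with hm1 | hm1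
    · -- m = 1 : φ preserves K
      have hKmap : ∀ g, g ∈ K ↔ φ g ∈ K := by
        intro g; rw [hmem, hmem, hlin, hm1, one_mul]
      by_cases hfix : ∀ x : K, φ (x : G) = (x : G)
      · -- φ fixes K pointwise; compare φ t with t
        have hnφt : n (φ t) = 1 := by rw [hlin, hnt, hm1]; ring
        by_cases he1 : φ t * t⁻¹ = 1
        · exfalso
          apply hφ
          have hte : φ t = t := by rwa [mul_inv_eq_one] at he1
          apply MulEquiv.ext
          intro g
          have hd : (g * t ^ (-n g) : G) ∈ K :=
            (hmem _).2 (by rw [hadd, n_zpow hadd, hnt]; ring)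
          have h1 : φ (g * t ^ (-n g)) = g * t ^ (-n g) := hfix ⟨_, hd⟩
          have e : g = (g * t ^ (-n g)) * t ^ (n g) := by group
          calc φ g = φ ((g * t ^ (-n g)) * t ^ (n g)) := by rw [← e]
            _ = φ (g * t ^ (-n g)) * (φ t) ^ (n g) := by rw [map_mul, map_zpow]
            _ = (g * t ^ (-n g)) * t ^ (n g) := by rw [h1, hte]
            _ = g := by rw [← e]
            _ = MulEquiv.refl G g := rfl
        · -- e := φ t * t⁻¹ ≠ 1 lies in K
          set e : G := φ t * t⁻¹ with hedef
          have heK : n e = 0 := by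
            rw [hedef, hadd, n_inv hadd, hnt, hnφt]; ring
          have hφt : φ t = e * t := by rw [hedef]; group
          have hcφt : φ t * t ^ (-n (φ t)) = e := by
            rw [hnφt, hφt]; group
          have htc : t * t ^ (-n t) = 1 := by rw [hnt]; group
          rcases hStri e heK with heS | heS | heS
          · -- e ∈ S : use the K-dominant cone built from S⁻¹
            set S' : Set G := {g | g⁻¹ ∈ S} with hS'
            have hS'0 : ∀ x ∈ S', n x = 0 := by
              intro x hx; have := hS0 _ hx; rw [n_inv hadd] at this; omega
            have hS'mul : ∀ a ∈ S', ∀ b ∈ S', a * b ∈ S' := by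
              intro a ha b hb
              show (a * b)⁻¹ ∈ S
              rw [mul_inv_rev]
              exact hSmul _ hb _ ha
            have hS'tri : ∀ g, n g = 0 → (g ∈ S' ∨ g⁻¹ ∈ S' ∨ g = 1) := by
              intro g hg
              rcases hStri g hg with h | h | h
              · exact Or.inr (Or.inl (by simpa [hS'] using h))
              · exact Or.inl h
              · exact Or.inr (Or.inr h)
            have hS'asym : ∀ g ∈ S', g⁻¹ ∉ S' := by
              intro g hg hg'
              exact hSasym g (by simpa [hS'] using hg') hg
            have hS'1 : (1 : G) ∉ S' := by simpa [hS'] using hS1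
            have hconjm' : ∀ k : ℤ, ∀ x ∈ S', t ^ k * x * t ^ (-k) ∈ S' := by
              intro k x hx
              show (t ^ k * x * t ^ (-k))⁻¹ ∈ S
              have ee : (t ^ k * x * t ^ (-k))⁻¹ = t ^ k * x⁻¹ * t ^ (-k) := by group
              rw [ee]
              exact hconjm k _ hx
            have cone := cone_dom n hadd t hnt S' hS'0 hS'mul hS'tri hS'asym hS'1 hconjm'
            refine ⟨_, cone, ?_⟩
            intro hEq
            have htP : t ∈ {g : G | g * t ^ (-n g) ∈ S' ∨ (g * t ^ (-n g) = 1 ∧ 0 < n g)} :=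
              Or.inr ⟨htc, by omega⟩
            have hmem' : φ t ∈ {g : G | g * t ^ (-n g) ∈ S' ∨ (g * t ^ (-n g) = 1 ∧ 0 < n g)} := by
              rw [← hEq]; exact ⟨t, htP, rfl⟩
            rcases hmem' with h | h
            · rw [hcφt] at h
              exact hSasym _ heS h
            · rw [hcφt] at h
              exact he1 h.1
          · -- e⁻¹ ∈ S : use the K-dominant cone built from S
            have cone := cone_dom n hadd t hnt S hS0 hSmul hStri hSasym hS1 hconjm
            refine ⟨_, cone, ?_⟩
            intro hEq
            have htP : t ∈ {g : G | g * t ^ (-n g) ∈ S ∨ (g * t ^ (-n g) = 1 ∧ 0 < n g)} :=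
              Or.inr ⟨htc, by omega⟩
            have hmem' : φ t ∈ {g : G | g * t ^ (-n g) ∈ S ∨ (g * t ^ (-n g) = 1 ∧ 0 < n g)} := by
              rw [← hEq]; exact ⟨t, htP, rfl⟩
            rcases hmem' with h | h
            · rw [hcφt] at h
              exact hSasym _ h heS
            · rw [hcφt] at h
              exact he1 h.1
          · exact absurd heS he1
      · -- φ restricts to a nontrivial automorphism ψ of K
        push_neg at hfix
        obtain ⟨x₀, hx₀⟩ := hfix
        set ψ : K ≃* K :=
          { toFun := fun x => ⟨φ (x : G), (hKmap (x : G)).1 x.2⟩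
            invFun := fun x => ⟨φ.symm (x : G),
              (hKmap (φ.symm (x : G))).2 (by rw [φ.apply_symm_apply]; exact x.2)⟩
            left_inv := fun x => Subtype.ext (φ.symm_apply_apply (x : G))
            right_inv := fun x => Subtype.ext (φ.apply_symm_apply (x : G))
            map_mul' := fun x y => Subtype.ext (map_mul φ (x : G) (y : G)) } with hψdef
        have hψval : ∀ x : K, (ψ x : G) = φ (x : G) := fun x => rfl
        have hψne : ψ ≠ MulEquiv.refl K := by
          intro h
          apply hx₀
          have h1 : ψ x₀ = x₀ := by rw [h]; rfl
          exact congrArg Subtype.val h1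
        obtain ⟨Q, hQ, hQne⟩ := hK ψ hψne
        obtain ⟨hQ0, hQmul, hQtri, hQasym, hQ1⟩ := subgroup_cone_props n K hmem hQ
        have cone := cone_lex n hadd (Subtype.val '' Q) hQ0 hQmul hQtri hQasym hQ1
        refine ⟨_, cone, ?_⟩
        intro hEq
        apply hQne
        ext x
        constructor
        · rintro ⟨y, hy, rfl⟩
          have h1 : (y : G) ∈ {g : G | 0 < n g ∨ g ∈ Subtype.val '' Q} :=
            Or.inr ⟨y, hy, rfl⟩
          have h2 : φ (y : G) ∈ {g : G | 0 < n g ∨ g ∈ Subtype.val '' Q} := by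
            rw [← hEq]; exact ⟨_, h1, rfl⟩
          rcases h2 with h2 | h2
          · exfalso
            have hy0 : n (y : G) = 0 := (hmem _).1 y.2
            rw [hlin, hm1, one_mul, hy0] at h2
            omega
          · obtain ⟨z, hz, hzval⟩ := h2
            have hz' : z = ψ y := Subtype.ext (by rw [hzval, hψval])
            exact hz' ▸ hz
        · intro hx
          have h1 : (x : G) ∈ {g : G | 0 < n g ∨ g ∈ Subtype.val '' Q} :=
            Or.inr ⟨x, hx, rfl⟩
          rw [← hEq] at h1
          obtain ⟨g, hg, hgx⟩ := h1
          have hng : n g = 0 := by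
            have h2 := hlin g
            rw [hgx, hm1, one_mul] at h2
            have hx0 : n (x : G) = 0 := (hmem _).1 x.2
            omega
          rcases hg with hg | hg
          · omega
          · obtain ⟨y, hy, rfl⟩ := hg
            refine ⟨y, hy, ?_⟩
            exact Subtype.ext (by rw [hψval, hgx])
    · -- m = -1 : the ℤ-dominant cone is moved
      have cone := cone_lex n hadd S hS0 hSmul hStri hSasym hS1
      refine ⟨_, cone, ?_⟩
      intro hEq
      have htP : t ∈ {g : G | 0 < n g ∨ g ∈ S} := Or.inl (by rw [hnt]; omega)
      have hmem' : φ t ∈ {g : G | 0 < n g ∨ g ∈ S} := by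
        rw [← hEq]; exact ⟨t, htP, rfl⟩
      have hnφt : n (φ t) = -1 := by rw [hlin, hnt, hm1]; ring
      rcases hmem' with h | h
      · omega
      · have := hS0 _ h; omega
  · -- some element of K is moved out of K
    push_neg at hA
    obtain ⟨g, hg0, hgn⟩ := hA
    have hget : ∃ g₀, g₀ ∈ S ∧ n (φ g₀) ≠ 0 := by
      rcases hStri g hg0 with h | h | h
      · exact ⟨g, h, hgn⟩
      · refine ⟨g⁻¹, h, ?_⟩
        rw [map_inv, n_inv hadd]
        omega
      · exfalso
        apply hgn
        rw [h, map_one, n_one hadd]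
    obtain ⟨g₀, hg₀S, hg₀n⟩ := hget
    rcases lt_or_gt_of_ne hg₀n with hlt | hgt
    · have cone := cone_lex n hadd S hS0 hSmul hStri hSasym hS1
      refine ⟨_, cone, ?_⟩
      intro hEq
      have h1 : g₀ ∈ {g : G | 0 < n g ∨ g ∈ S} := Or.inr hg₀S
      have h2 : φ g₀ ∈ {g : G | 0 < n g ∨ g ∈ S} := by
        rw [← hEq]; exact ⟨g₀, h1, rfl⟩
      rcases h2 with h2 | h2
      · omega
      · have := hS0 _ h2; omega
    · have hadd' : ∀ a b : G, -n (a * b) = -n a + -n b := by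
        intro a b; rw [hadd]; ring
      have cone : IsPositiveCone {g : G | 0 < -n g ∨ g ∈ S} := cone_lex (fun g => -n g) hadd' S
        (fun x hx => by show -n x = 0; have := hS0 x hx; omega)
        hSmul
        (fun g hg => hStri g (by have hg' : -n g = 0 := hg; omega))
        hSasym hS1
      refine ⟨_, cone, ?_⟩
      intro hEq
      have h1 : g₀ ∈ {g : G | 0 < -n g ∨ g ∈ S} := Or.inr hg₀S
      have h2 : φ g₀ ∈ {g : G | 0 < -n g ∨ g ∈ S} := by
        rw [← hEq]; exact ⟨g₀, h1, rfl⟩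
      rcases h2 with h2 | h2
      · have h3 : 0 < -n (φ g₀) := h2
        omega
      · have := hS0 _ h2; omega
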